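/- Let k be a field of characteristic different from 2. Up to isomorphism there is a unique nontrivial connected Hopf grading of k^{C_3} and its grading group is C_2: the trivial-degree component is spanned by δ_1 and δ_t + δ_{t²}, and the nontrivial component is spanned by h = δ_t − δ_{t²}. If char k = 2 there is no nontrivial connected Hopf grading of k^{C_3}. -/

import Mathlib

open Multiplicative

section Aux
variable {k : Type*} [Field k]

lemma myExt3 {f g : Multiplicative (ZMod 3) → k} (h1 : f 1 = g 1)
    (h2 : f (ofAdd 1) = g (ofAdd 1)) (h3 : f (ofAdd 2) = g (ofAdd 2)) : f = g := by
  funext x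
  have h : ∀ y : Multiplicative (ZMod 3), y = 1 ∨ y = ofAdd 1 ∨ y = ofAdd 2 := by decide
  rcases h x with h|h|h <;> rw [h] <;> assumption

lemma myTwoDep (a b c d : k) (hD : a*d - b*c = 0) (hA : ¬(a = 0 ∧ b = 0)) :
    ∃ p q : k, q ≠ 0 ∧ p*a + q*c = 0 ∧ p*b + q*d = 0 := by
  by_cases ha : a = 0
  · have hb : b ≠ 0 := fun h => hA ⟨ha, h⟩
    have hc : c = 0 := by
      have h : b * c = 0 := by linear_combination -hD + d * ha
      rcases mul_eq_zero.mp h with h|h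
      · exact absurd h hb
      · exact h
    exact ⟨d, -b, neg_ne_zero.mpr hb, by rw [ha, hc]; ring, by ring⟩
  · exact ⟨c, -a, neg_ne_zero.mpr ha, by ring, by linear_combination -hD⟩

lemma myThreeDep (a b c d e f : k) :
    ∃ p q r : k, ¬(p = 0 ∧ q = 0 ∧ r = 0) ∧ p*a + q*c + r*e = 0 ∧ p*b + q*d + r*f = 0 := by
  by_cases hD : a*d - b*c = 0
  · by_cases hA : a = 0 ∧ b = 0
    · exact ⟨1, 0, 0, fun h => one_ne_zero h.1, by rw [hA.1]; ring, by rw [hA.2]; ring⟩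
    · obtain ⟨p, q, hq, h1, h2⟩ := myTwoDep a b c d hD hA
      exact ⟨p, q, 0, fun h => hq h.2.1, by linear_combination h1, by linear_combination h2⟩
  · have hD' : d * a - c * b ≠ 0 := fun h => hD (by linear_combination h)
    refine ⟨(e*d - f*c)/(a*d - b*c), (a*f - b*e)/(a*d - b*c), -1,
      fun h => by simpa using h.2.2, ?_, ?_⟩ <;> field_simp <;> ring

def mulLf (k G : Type*) [Field k] (a : G → k) : (G → k) →ₗ[k] (G × G → k) where
  toFun b := fun p => b p.1 * a p.2
  map_add' b₁ b₂ := by funext p; simp [add_mul]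
  map_smul' r b := by funext p; simp [mul_assoc]

def mulRf (k G : Type*) [Field k] (a : G → k) : (G → k) →ₗ[k] (G × G → k) where
  toFun c := fun p => a p.1 * c p.2
  map_add' c₁ c₂ := by funext p; simp [mul_add]
  map_smul' r c := by funext p; simp; ring

end Aux

/-- The degree-`s` component of the convolution grading of `k^{G×G} ≅ k^G ⊗ k^G`
induced by a grading `𝒜` of `k^G` by an abelian group `Γ`. -/
def tensorComponent {k G Γ : Type*} [Field k] [Group G] [Group Γ]
    (𝒜 : Γ → Submodule k (G → k)) (s : Γ) : Submodule k (G × G → k) :=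
  ⨆ u : Γ, Submodule.span k
    {f : G × G → k | ∃ b ∈ 𝒜 u, ∃ c ∈ 𝒜 (u⁻¹ * s), f = fun p => b p.1 * c p.2}

set_option maxHeartbeats 1600000 in
/-- Let `C_3 = ⟨t⟩` and let `𝒜` be a nontrivial connected Hopf grading of
`k^{C_3}` by an abelian group `Γ` (comultiplication, counit and antipode homogeneous).  Then
the characteristic of `k` is different from `2`, and the grading is the unique one with
group `C_2`: there is `s ∈ Γ` with `s ≠ 1`, `s² = 1`, `Γ = {1, s}`, trivial component
spanned by `δ_1` and `δ_t + δ_{t²}`, and degree-`s` component spanned by `δ_t − δ_{t²}`.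
In particular in characteristic `2` there is no nontrivial connected Hopf grading. -/
theorem hopf_gradings_of_functions_on_C3
    {k Γ : Type*} [Field k] [CommGroup Γ] [DecidableEq Γ]
    (𝒜 : Γ → Submodule k (Multiplicative (ZMod 3) → k))
    (hdecomp : DirectSum.IsInternal 𝒜)
    (hmul : ∀ s t : Γ, ∀ a ∈ 𝒜 s, ∀ b ∈ 𝒜 t, a * b ∈ 𝒜 (s * t))
    (hone : (1 : Multiplicative (ZMod 3) → k) ∈ 𝒜 1)
    (hcounit : ∀ s : Γ, s ≠ 1 → ∀ a ∈ 𝒜 s, a 1 = 0)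
    (hantipode : ∀ s : Γ, ∃ t : Γ,
      ∀ a ∈ 𝒜 s, (fun x : Multiplicative (ZMod 3) => a x⁻¹) ∈ 𝒜 t)
    (hcomul : ∀ s : Γ, ∀ a ∈ 𝒜 s,
      (fun p : Multiplicative (ZMod 3) × Multiplicative (ZMod 3) => a (p.1 * p.2))
        ∈ tensorComponent 𝒜 s)
    (hconn : Subgroup.closure {s : Γ | 𝒜 s ≠ ⊥} = ⊤)
    (hnontriv : ∃ s : Γ, s ≠ 1 ∧ 𝒜 s ≠ ⊥) :
    (2 : k) ≠ 0 ∧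
    ∃ s : Γ, s ≠ 1 ∧ s * s = 1 ∧ (∀ u : Γ, u = 1 ∨ u = s) ∧
      𝒜 1 = Submodule.span k
        {(Pi.single (1 : Multiplicative (ZMod 3)) (1 : k) : Multiplicative (ZMod 3) → k),
         (Pi.single (Multiplicative.ofAdd (1 : ZMod 3)) (1 : k) : Multiplicative (ZMod 3) → k)
           + (Pi.single (Multiplicative.ofAdd (2 : ZMod 3)) (1 : k) :
              Multiplicative (ZMod 3) → k)} ∧
      𝒜 s = Submodule.span k
        {(Pi.single (Multiplicative.ofAdd (1 : ZMod 3)) (1 : k) : Multiplicative (ZMod 3) → k)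
           - (Pi.single (Multiplicative.ofAdd (2 : ZMod 3)) (1 : k) :
              Multiplicative (ZMod 3) → k)} := by
  classical
  obtain ⟨s, hs1, hsBot⟩ := hnontriv
  -- ground facts about C₃
  have ht1 : (ofAdd (1:ZMod 3)) ≠ 1 := by decide
  have ht2 : (ofAdd (2:ZMod 3)) ≠ 1 := by decide
  have ht12 : (ofAdd (1:ZMod 3)) ≠ ofAdd (2:ZMod 3) := by decide
  have hm11 : (ofAdd (1:ZMod 3)) * ofAdd (1:ZMod 3) = ofAdd (2:ZMod 3) := by decide
  have hm12 : (ofAdd (1:ZMod 3)) * ofAdd (2:ZMod 3) = 1 := by decide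
  have hm21 : (ofAdd (2:ZMod 3)) * ofAdd (1:ZMod 3) = 1 := by decide
  have hm22 : (ofAdd (2:ZMod 3)) * ofAdd (2:ZMod 3) = ofAdd (1:ZMod 3) := by decide
  have hiv1 : (ofAdd (1:ZMod 3))⁻¹ = ofAdd (2:ZMod 3) := by decide
  have hiv2 : (ofAdd (2:ZMod 3))⁻¹ = ofAdd (1:ZMod 3) := by decide
  -- evaluations of Pi.single
  have p00 : (Pi.single (1:Multiplicative (ZMod 3)) (1:k) : Multiplicative (ZMod 3) → k) 1 = 1 := by simp
  have p01 : (Pi.single (1:Multiplicative (ZMod 3)) (1:k) : Multiplicative (ZMod 3) → k) (ofAdd 1) = 0 :=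
    Pi.single_eq_of_ne ht1 _
  have p02 : (Pi.single (1:Multiplicative (ZMod 3)) (1:k) : Multiplicative (ZMod 3) → k) (ofAdd 2) = 0 :=
    Pi.single_eq_of_ne ht2 _
  have p10 : (Pi.single (ofAdd (1:ZMod 3)) (1:k) : Multiplicative (ZMod 3) → k) 1 = 0 := Pi.single_eq_of_ne (Ne.symm ht1) _
  have p11 : (Pi.single (ofAdd (1:ZMod 3)) (1:k) : Multiplicative (ZMod 3) → k) (ofAdd 1) = 1 := by simp
  have p12 : (Pi.single (ofAdd (1:ZMod 3)) (1:k) : Multiplicative (ZMod 3) → k) (ofAdd 2) = 0 := Pi.single_eq_of_ne (Ne.symm ht12) _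
  have p20 : (Pi.single (ofAdd (2:ZMod 3)) (1:k) : Multiplicative (ZMod 3) → k) 1 = 0 := Pi.single_eq_of_ne (Ne.symm ht2) _
  have p21 : (Pi.single (ofAdd (2:ZMod 3)) (1:k) : Multiplicative (ZMod 3) → k) (ofAdd 1) = 0 := Pi.single_eq_of_ne ht12 _
  have p22 : (Pi.single (ofAdd (2:ZMod 3)) (1:k) : Multiplicative (ZMod 3) → k) (ofAdd 2) = 1 := by simp
  -- disjointness
  have hdisj : ∀ {i j : Γ}, i ≠ j → ∀ x, x ∈ 𝒜 i → x ∈ 𝒜 j → x = 0 := by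
    intro i j hij x hxi hxj
    exact Submodule.disjoint_def.mp (hdecomp.submodule_iSupIndep.pairwiseDisjoint hij) x hxi hxj
  have hdisjSup : ∀ (l i j : Γ), i ≠ l → j ≠ l → ∀ x y z : Multiplicative (ZMod 3) → k,
      x ∈ 𝒜 l → y ∈ 𝒜 i → z ∈ 𝒜 j → x = y + z → x = 0 := by
    intro l i j hi hj x y z hx hy hz hxyz
    have h1 : x ∈ ⨆ (m : Γ) (_ : m ≠ l), 𝒜 m := by
      rw [hxyz]
      exact add_mem (Submodule.mem_iSup_of_mem i (Submodule.mem_iSup_of_mem hi hy))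
        (Submodule.mem_iSup_of_mem j (Submodule.mem_iSup_of_mem hj hz))
    exact Submodule.disjoint_def.mp (hdecomp.submodule_iSupIndep l) x hx h1
  have hzero_of : ∀ {c : Multiplicative (ZMod 3) → k}, c 1 = 0 → c (ofAdd 1) = 0 →
      c (ofAdd 2) = 0 → c = 0 := by
    intro c h0 h1 h2
    exact myExt3 (by simpa using h0) (by simpa using h1) (by simpa using h2)
  -- any two elements of a nontrivial component are proportional
  have hdet : ∀ i : Γ, i ≠ 1 → ∀ c d : Multiplicative (ZMod 3) → k, c ∈ 𝒜 i → d ∈ 𝒜 i →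
      c (ofAdd 1) * d (ofAdd 2) - c (ofAdd 2) * d (ofAdd 1) = 0 := by
    intro i hi c d hc hd
    by_contra hD
    have hc1 : c 1 = 0 := hcounit i hi c hc
    have hd1 : d 1 = 0 := hcounit i hi d hd
    have he1 : (Pi.single (ofAdd (1:ZMod 3)) (1:k) : Multiplicative (ZMod 3) → k) =
        (d (ofAdd 2) / (c (ofAdd 1) * d (ofAdd 2) - c (ofAdd 2) * d (ofAdd 1))) • c -
        (c (ofAdd 2) / (c (ofAdd 1) * d (ofAdd 2) - c (ofAdd 2) * d (ofAdd 1))) • d := by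
      have hD' : d (ofAdd 2) * c (ofAdd 1) - c (ofAdd 2) * d (ofAdd 1) ≠ 0 :=
        fun h => hD (by linear_combination h)
      refine myExt3 ?_ ?_ ?_
      · simp [p10, hc1, hd1]
      · rw [p11]; simp only [Pi.sub_apply, Pi.smul_apply, smul_eq_mul]; field_simp
      · rw [p12]; simp only [Pi.sub_apply, Pi.smul_apply, smul_eq_mul]; field_simp; ring
    have hmem : (Pi.single (ofAdd (1:ZMod 3)) (1:k) : Multiplicative (ZMod 3) → k) ∈ 𝒜 i := by
      rw [he1]; exact sub_mem (Submodule.smul_mem _ _ hc) (Submodule.smul_mem _ _ hd)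
    have hmem2 : (Pi.single (ofAdd (1:ZMod 3)) (1:k) : Multiplicative (ZMod 3) → k) * (Pi.single (ofAdd (1:ZMod 3)) (1:k) : Multiplicative (ZMod 3) → k) ∈ 𝒜 (i*i) :=
      hmul i i _ hmem _ hmem
    have hsq : (Pi.single (ofAdd (1:ZMod 3)) (1:k) : Multiplicative (ZMod 3) → k) * (Pi.single (ofAdd (1:ZMod 3)) (1:k) : Multiplicative (ZMod 3) → k) =
        (Pi.single (ofAdd (1:ZMod 3)) (1:k) : Multiplicative (ZMod 3) → k) := by
      refine myExt3 ?_ ?_ ?_ <;> simp [Pi.mul_apply, p10, p11, p12]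
    rw [hsq] at hmem2
    have hne : i * i ≠ i := fun h => hi (mul_eq_right.mp h)
    have h0 := hdisj hne _ hmem2 hmem
    have := congrFun h0 (ofAdd (1:ZMod 3))
    rw [p11] at this
    have h1 : (1:k) = 0 := by simpa using this
    exact one_ne_zero h1
  have hspan : ∀ i : Γ, i ≠ 1 → ∀ a : Multiplicative (ZMod 3) → k, a ∈ 𝒜 i → a ≠ 0 →
      ∀ c ∈ 𝒜 i, ∃ μ : k, c = μ • a := by
    intro i hi a ha ha0 c hc
    have hD := hdet i hi a c ha hc
    have ha1 := hcounit i hi a ha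
    have hc1 := hcounit i hi c hc
    by_cases hα : a (ofAdd 1) = 0
    · have hβ : a (ofAdd 2) ≠ 0 := fun h => ha0 (hzero_of ha1 hα h)
      have hct1 : c (ofAdd 1) = 0 := by
        have h : a (ofAdd 2) * c (ofAdd 1) = 0 := by linear_combination -hD + (c (ofAdd 2)) * hα
        rcases mul_eq_zero.mp h with h | h
        · exact absurd h hβ
        · exact h
      refine ⟨c (ofAdd 2) / a (ofAdd 2), myExt3 ?_ ?_ ?_⟩
      · simp [hc1, ha1]
      · simp [hct1, hα]
      · simp only [Pi.smul_apply, smul_eq_mul]; field_simp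
    · refine ⟨c (ofAdd 1) / a (ofAdd 1), myExt3 ?_ ?_ ?_⟩
      · simp [hc1, ha1]
      · simp only [Pi.smul_apply, smul_eq_mul]; field_simp
      · simp only [Pi.smul_apply, smul_eq_mul]; field_simp; linear_combination hD
  by_cases hex : ∃ u : Γ, u ≠ 1 ∧ u ≠ s ∧ 𝒜 u ≠ ⊥
  · exfalso
    obtain ⟨u, hu1, hus, huBot⟩ := hex
    obtain ⟨a, ha, ha0⟩ := (Submodule.ne_bot_iff _).mp hsBot
    obtain ⟨b, hb, hb0⟩ := (Submodule.ne_bot_iff _).mp huBot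
    have ha1 : a 1 = 0 := hcounit s hs1 a ha
    have hb1 : b 1 = 0 := hcounit u hu1 b hb
    have hD : a (ofAdd 1) * b (ofAdd 2) - a (ofAdd 2) * b (ofAdd 1) ≠ 0 := by
      intro hD0
      have hA : ¬(a (ofAdd 1) = 0 ∧ a (ofAdd 2) = 0) := fun h => ha0 (hzero_of ha1 h.1 h.2)
      obtain ⟨p, q, hq, h1, h2⟩ := myTwoDep _ _ _ _ hD0 hA
      have hrel : p • a + q • b = 0 := by
        refine hzero_of ?_ ?_ ?_ <;>
          simp only [Pi.add_apply, Pi.smul_apply, smul_eq_mul, ha1, hb1]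
        · ring
        · linear_combination h1
        · linear_combination h2
      have h3 : q • b = (-p) • a := by
        have h4 : q • b = -(p • a) := by rw [eq_neg_iff_add_eq_zero, add_comm]; exact hrel
        rw [h4, neg_smul]
      have h5 : q • b ∈ 𝒜 s := by rw [h3]; exact Submodule.smul_mem _ _ ha
      have h6 : q • b ∈ 𝒜 u := Submodule.smul_mem _ _ hb
      have h7 := hdisj hus _ h6 h5
      rcases smul_eq_zero.mp h7 with h | h
      · exact hq h
      · exact hb0 h
    have hsupp3 : ∀ x : Γ, 𝒜 x ≠ ⊥ → x = 1 ∨ x = s ∨ x = u := by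
      intro x hx
      by_contra h
      push_neg at h
      obtain ⟨hx1, hxs, hxu⟩ := h
      obtain ⟨cx, hcx, hcx0⟩ := (Submodule.ne_bot_iff _).mp hx
      have hcx1 : cx 1 = 0 := hcounit x hx1 cx hcx
      obtain ⟨p, q, r, hnt, h1, h2⟩ := myThreeDep (a (ofAdd 1)) (a (ofAdd 2)) (b (ofAdd 1))
        (b (ofAdd 2)) (cx (ofAdd 1)) (cx (ofAdd 2))
      have hrel : r • cx = (-p) • a + (-q) • b := by
        refine myExt3 ?_ ?_ ?_ <;>
          simp only [Pi.add_apply, Pi.smul_apply, smul_eq_mul, ha1, hb1, hcx1]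
        · ring
        · linear_combination h1
        · linear_combination h2
      have h3 : r • cx = 0 := hdisjSup x s u (Ne.symm hxs) (Ne.symm hxu) _ _ _
        (Submodule.smul_mem _ _ hcx) (Submodule.smul_mem _ _ ha) (Submodule.smul_mem _ _ hb) hrel
      rcases smul_eq_zero.mp h3 with h | h
      · rw [h, zero_smul] at hrel
        have h4 : (-q) • b = (-(-p)) • a := by
          have h5 : (-p) • a + (-q) • b = 0 := hrel.symm
          have h6 : (-q) • b = -((-p) • a) := by rw [eq_neg_iff_add_eq_zero, add_comm]; exact h5
          rw [h6, ← neg_smul]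
        have h5 : (-q) • b ∈ 𝒜 s := by rw [h4]; exact Submodule.smul_mem _ _ ha
        have h6 := hdisj hus _ (Submodule.smul_mem _ _ hb) h5
        rcases smul_eq_zero.mp h6 with h7 | h7
        · rw [neg_eq_zero] at h7
          rw [h7, neg_zero, zero_smul, add_zero] at hrel
          have h8 : p = 0 := by
            rcases smul_eq_zero.mp hrel.symm with h9 | h9
            · simpa using h9
            · exact absurd h9 ha0
          exact hnt ⟨h8, h7, h⟩
        · exact hb0 h7
      · exact hcx0 h
    have haa0 : a * a ≠ 0 := by
      intro h
      apply ha0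
      apply hzero_of ha1
      · have h1 := congrFun h (ofAdd (1:ZMod 3))
        rw [Pi.mul_apply, Pi.zero_apply] at h1
        exact mul_self_eq_zero.mp h1
      · have h1 := congrFun h (ofAdd (2:ZMod 3))
        rw [Pi.mul_apply, Pi.zero_apply] at h1
        exact mul_self_eq_zero.mp h1
    have hbb0 : b * b ≠ 0 := by
      intro h
      apply hb0
      apply hzero_of hb1
      · have h1 := congrFun h (ofAdd (1:ZMod 3))
        rw [Pi.mul_apply, Pi.zero_apply] at h1
        exact mul_self_eq_zero.mp h1
      · have h1 := congrFun h (ofAdd (2:ZMod 3))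
        rw [Pi.mul_apply, Pi.zero_apply] at h1
        exact mul_self_eq_zero.mp h1
    have hcramer : ∀ v : Multiplicative (ZMod 3) → k, v 1 = 0 →
        v = ((v (ofAdd 1) * b (ofAdd 2) - v (ofAdd 2) * b (ofAdd 1)) /
              (a (ofAdd 1) * b (ofAdd 2) - a (ofAdd 2) * b (ofAdd 1))) • a
          + ((a (ofAdd 1) * v (ofAdd 2) - a (ofAdd 2) * v (ofAdd 1)) /
              (a (ofAdd 1) * b (ofAdd 2) - a (ofAdd 2) * b (ofAdd 1))) • b := by
      intro v hv
      have hD' : b (ofAdd 2) * a (ofAdd 1) - b (ofAdd 1) * a (ofAdd 2) ≠ 0 :=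
        fun h => hD (by linear_combination h)
      refine myExt3 ?_ ?_ ?_ <;>
        simp only [Pi.add_apply, Pi.smul_apply, smul_eq_mul, ha1, hb1, hv]
      · ring
      · field_simp
        ring
      · field_simp
        ring
    have hplane : ∀ v : Multiplicative (ZMod 3) → k, v 1 = 0 → v ∈ 𝒜 1 → v = 0 := by
      intro v hv hv1
      exact hdisjSup 1 s u hs1 hu1 v _ _ hv1 (Submodule.smul_mem _ _ ha)
        (Submodule.smul_mem _ _ hb) (hcramer v hv)
    have hss : s * s = u := by
      have hmem := hmul s s a ha a ha
      have hbot : 𝒜 (s*s) ≠ ⊥ := by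
        intro h
        rw [h, Submodule.mem_bot] at hmem
        exact haa0 hmem
      have haa1 : (a*a) 1 = 0 := by rw [Pi.mul_apply, ha1, mul_zero]
      rcases hsupp3 _ hbot with h | h | h
      · exact absurd (hplane _ haa1 (h ▸ hmem)) haa0
      · exact absurd (mul_eq_right.mp h) hs1
      · exact h
    have huu : u * u = s := by
      have hmem := hmul u u b hb b hb
      have hbot : 𝒜 (u*u) ≠ ⊥ := by
        intro h
        rw [h, Submodule.mem_bot] at hmem
        exact hbb0 hmem
      have hbb1 : (b*b) 1 = 0 := by rw [Pi.mul_apply, hb1, mul_zero]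
      rcases hsupp3 _ hbot with h | h | h
      · exact absurd (hplane _ hbb1 (h ▸ hmem)) hbb0
      · exact h
      · exact absurd (mul_eq_right.mp h) hu1
    have hsu : s * u = 1 := by
      have h1 : (s*s)*(s*s) = s := by rw [hss, huu]
      have h2 : (s*s*s)*s = 1*s := by
        rw [one_mul, mul_assoc (s*s) s s]
        exact h1
      have h3 : s*s*s = 1 := mul_right_cancel h2
      rw [← hss, ← mul_assoc]
      exact h3
    have hab : a * b ∈ 𝒜 1 := by
      have h := hmul s u a ha b hb
      rwa [hsu] at h
    have hab0 : a * b = 0 := by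
      apply hplane
      · rw [Pi.mul_apply, ha1, zero_mul]
      · exact hab
    have hABg1 : a (ofAdd 1) * b (ofAdd 1) = 0 := by
      have h := congrFun hab0 (ofAdd (1:ZMod 3))
      rwa [Pi.mul_apply, Pi.zero_apply] at h
    have hABg2 : a (ofAdd 2) * b (ofAdd 2) = 0 := by
      have h := congrFun hab0 (ofAdd (2:ZMod 3))
      rwa [Pi.mul_apply, Pi.zero_apply] at h
    obtain ⟨w, hw1, hwwne, hww1, hw3, he1, he2, hsuppw⟩ :
        ∃ w : Γ, w ≠ 1 ∧ w*w ≠ w ∧ w*w ≠ 1 ∧ (w*w)*w = 1 ∧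
          (Pi.single (ofAdd (1:ZMod 3)) (1:k) : Multiplicative (ZMod 3) → k) ∈ 𝒜 w ∧
          (Pi.single (ofAdd (2:ZMod 3)) (1:k) : Multiplicative (ZMod 3) → k) ∈ 𝒜 (w*w) ∧
          (∀ x : Γ, 𝒜 x ≠ ⊥ → x = 1 ∨ x = w ∨ x = w*w) := by
      rcases mul_eq_zero.mp hABg1 with h | h
      · have hβ : a (ofAdd 2) ≠ 0 := fun hh => ha0 (hzero_of ha1 h hh)
        have hγ : b (ofAdd 1) ≠ 0 := by
          intro hh
          apply hD
          rw [h, hh]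
          ring
        have hδ : b (ofAdd 2) = 0 := by
          rcases mul_eq_zero.mp hABg2 with h' | h'
          · exact absurd h' hβ
          · exact h'
        have he2' : (Pi.single (ofAdd (2:ZMod 3)) (1:k) : Multiplicative (ZMod 3) → k)
            = (a (ofAdd 2))⁻¹ • a := by
          refine myExt3 ?_ ?_ ?_ <;>
            simp only [Pi.smul_apply, smul_eq_mul, p20, p21, p22, ha1, h] <;>
            field_simp <;> simp
        have he1' : (Pi.single (ofAdd (1:ZMod 3)) (1:k) : Multiplicative (ZMod 3) → k)
            = (b (ofAdd 1))⁻¹ • b := by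
          refine myExt3 ?_ ?_ ?_ <;>
            simp only [Pi.smul_apply, smul_eq_mul, p10, p11, p12, hb1, hδ] <;>
            field_simp <;> simp
        refine ⟨u, hu1, ?_, ?_, ?_, ?_, ?_, ?_⟩
        · rw [huu]; exact Ne.symm hus
        · rw [huu]; exact hs1
        · rw [huu]; exact hsu
        · rw [he1']; exact Submodule.smul_mem _ _ hb
        · rw [huu, he2']; exact Submodule.smul_mem _ _ ha
        · intro x hx
          rcases hsupp3 x hx with h' | h' | h'
          · exact Or.inl h'
          · right; right; rw [huu]; exact h'
          · exact Or.inr (Or.inl h')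
      · have hδ : b (ofAdd 2) ≠ 0 := fun hh => hb0 (hzero_of hb1 h hh)
        have hα : a (ofAdd 1) ≠ 0 := by
          intro hh
          apply hD
          rw [h, hh]
          ring
        have hβ : a (ofAdd 2) = 0 := by
          rcases mul_eq_zero.mp hABg2 with h' | h'
          · exact h'
          · exact absurd h' hδ
        have he1' : (Pi.single (ofAdd (1:ZMod 3)) (1:k) : Multiplicative (ZMod 3) → k)
            = (a (ofAdd 1))⁻¹ • a := by
          refine myExt3 ?_ ?_ ?_ <;>
            simp only [Pi.smul_apply, smul_eq_mul, p10, p11, p12, ha1, hβ] <;>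
            field_simp <;> simp
        have he2' : (Pi.single (ofAdd (2:ZMod 3)) (1:k) : Multiplicative (ZMod 3) → k)
            = (b (ofAdd 2))⁻¹ • b := by
          refine myExt3 ?_ ?_ ?_ <;>
            simp only [Pi.smul_apply, smul_eq_mul, p20, p21, p22, hb1, h] <;>
            field_simp <;> simp
        refine ⟨s, hs1, ?_, ?_, ?_, ?_, ?_, ?_⟩
        · rw [hss]; exact hus
        · rw [hss]; exact hu1
        · rw [hss, mul_comm]; exact hsu
        · rw [he1']; exact Submodule.smul_mem _ _ ha
        · rw [hss, he2']; exact Submodule.smul_mem _ _ hb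
        · intro x hx
          rcases hsupp3 x hx with h' | h' | h'
          · exact Or.inl h'
          · exact Or.inr (Or.inl h')
          · right; right; rw [hss]; exact h'
    have he1ne : (Pi.single (ofAdd (1:ZMod 3)) (1:k) : Multiplicative (ZMod 3) → k) ≠ 0 := by
      intro hh
      have h := congrFun hh (ofAdd (1:ZMod 3))
      rw [p11, Pi.zero_apply] at h
      exact one_ne_zero h
    have he2ne : (Pi.single (ofAdd (2:ZMod 3)) (1:k) : Multiplicative (ZMod 3) → k) ≠ 0 := by
      intro hh
      have h := congrFun hh (ofAdd (2:ZMod 3))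
      rw [p22, Pi.zero_apply] at h
      exact one_ne_zero h
    have hspw : ∀ c ∈ 𝒜 w, ∃ μ : k,
        c = μ • (Pi.single (ofAdd (1:ZMod 3)) (1:k) : Multiplicative (ZMod 3) → k) :=
      hspan w hw1 _ he1 he1ne
    have hspw2 : ∀ c ∈ 𝒜 (w*w), ∃ μ : k,
        c = μ • (Pi.single (ofAdd (2:ZMod 3)) (1:k) : Multiplicative (ZMod 3) → k) :=
      hspan (w*w) hww1 _ he2 he2ne
    have hwinv : (w*w)⁻¹ * w = w*w := by
      rw [inv_eq_of_mul_eq_one_right hw3]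
    have hbound : tensorComponent 𝒜 w ≤
        Submodule.map (mulLf k (Multiplicative (ZMod 3))
          (Pi.single (ofAdd (1:ZMod 3)) (1:k))) (𝒜 1) ⊔
        (Submodule.map (mulRf k (Multiplicative (ZMod 3))
          (Pi.single (ofAdd (1:ZMod 3)) (1:k))) (𝒜 1) ⊔
         Submodule.span k {fun p : Multiplicative (ZMod 3) × Multiplicative (ZMod 3) =>
           (Pi.single (ofAdd (2:ZMod 3)) (1:k) : Multiplicative (ZMod 3) → k) p.1 *
           (Pi.single (ofAdd (2:ZMod 3)) (1:k) : Multiplicative (ZMod 3) → k) p.2}) := by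
      unfold tensorComponent
      refine iSup_le ?_
      intro x
      rw [Submodule.span_le]
      rintro ff ⟨bb, hbb, cc, hcc, rfl⟩
      by_cases hx1 : x = 1
      · subst hx1
        rw [inv_one, one_mul] at hcc
        obtain ⟨μ, rfl⟩ := hspw cc hcc
        apply Submodule.mem_sup_left
        refine Submodule.mem_map.mpr ⟨μ • bb, Submodule.smul_mem _ _ hbb, ?_⟩
        funext p
        show (μ • bb) p.1 * (Pi.single (ofAdd (1:ZMod 3)) (1:k) : Multiplicative (ZMod 3) → k) p.2
          = bb p.1 * (μ • (Pi.single (ofAdd (1:ZMod 3)) (1:k) : Multiplicative (ZMod 3) → k)) p.2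
        simp only [Pi.smul_apply, smul_eq_mul]
        ring
      · by_cases hxw : x = w
        · subst hxw
          rw [inv_mul_cancel] at hcc
          obtain ⟨μ, rfl⟩ := hspw bb hbb
          apply Submodule.mem_sup_right
          apply Submodule.mem_sup_left
          refine Submodule.mem_map.mpr ⟨μ • cc, Submodule.smul_mem _ _ hcc, ?_⟩
          funext p
          show (Pi.single (ofAdd (1:ZMod 3)) (1:k) : Multiplicative (ZMod 3) → k) p.1 * (μ • cc) p.2
            = (μ • (Pi.single (ofAdd (1:ZMod 3)) (1:k) : Multiplicative (ZMod 3) → k)) p.1 * cc p.2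
          simp only [Pi.smul_apply, smul_eq_mul]
          ring
        · by_cases hxww : x = w*w
          · subst hxww
            rw [hwinv] at hcc
            obtain ⟨μ, rfl⟩ := hspw2 bb hbb
            obtain ⟨ν, rfl⟩ := hspw2 cc hcc
            apply Submodule.mem_sup_right
            apply Submodule.mem_sup_right
            refine Submodule.mem_span_singleton.mpr ⟨μ * ν, ?_⟩
            funext p
            simp only [Pi.smul_apply, smul_eq_mul]
            ring
          · have hbot : 𝒜 x = ⊥ := by
              by_contra hnb
              rcases hsuppw x hnb with h | h | h
              · exact hx1 h
              · exact hxw h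
              · exact hxww h
            rw [hbot, Submodule.mem_bot] at hbb
            subst hbb
            rw [show (fun p : Multiplicative (ZMod 3) × Multiplicative (ZMod 3) =>
              (0 : Multiplicative (ZMod 3) → k) p.1 * cc p.2) = 0 from by funext p; simp]
            exact zero_mem _
    have hΔ := hbound (hcomul w _ he1)
    rw [Submodule.mem_sup] at hΔ
    obtain ⟨y, hy, z, hz, hyz⟩ := hΔ
    obtain ⟨z1, hz1, z2, hz2, hzz⟩ := Submodule.mem_sup.mp hz
    obtain ⟨f, hf, rfl⟩ := Submodule.mem_map.mp hy
    obtain ⟨g, hg, rfl⟩ := Submodule.mem_map.mp hz1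
    obtain ⟨r, rfl⟩ := Submodule.mem_span_singleton.mp hz2
    rw [← hzz] at hyz
    have key : ∀ x y : Multiplicative (ZMod 3),
        (Pi.single (ofAdd (1:ZMod 3)) (1:k) : Multiplicative (ZMod 3) → k) (x*y)
        = f x * (Pi.single (ofAdd (1:ZMod 3)) (1:k) : Multiplicative (ZMod 3) → k) y
          + ((Pi.single (ofAdd (1:ZMod 3)) (1:k) : Multiplicative (ZMod 3) → k) x * g y
            + r * ((Pi.single (ofAdd (2:ZMod 3)) (1:k) : Multiplicative (ZMod 3) → k) x *
                   (Pi.single (ofAdd (2:ZMod 3)) (1:k) : Multiplicative (ZMod 3) → k) y)) := by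
      intro x y
      have h := congrFun hyz (x, y)
      simpa [mulLf, mulRf] using h.symm
    have hf1 : f 1 = 1 := by
      have h := key 1 (ofAdd 1)
      rw [one_mul, p11, p10, p20] at h
      linear_combination -h
    have hf2 : f (ofAdd 2) = 0 := by
      have h := key (ofAdd 2) (ofAdd 1)
      rw [hm21, p10, p11, p12, p22, p21] at h
      linear_combination -h
    obtain ⟨t0, ht0⟩ := hantipode 1
    have h1t : (1 : Multiplicative (ZMod 3) → k) ∈ 𝒜 t0 := ht0 1 hone
    have ht01 : t0 = 1 := by
      by_contra hne
      have h := hdisj hne _ h1t hone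
      have h2 := congrFun h 1
      rw [Pi.one_apply, Pi.zero_apply] at h2
      exact one_ne_zero h2
    have hSf : (fun x : Multiplicative (ZMod 3) => f x⁻¹) ∈ 𝒜 1 := ht01 ▸ ht0 f hf
    have hprod : f * (fun x : Multiplicative (ZMod 3) => f x⁻¹) ∈ 𝒜 1 := by
      have h := hmul 1 1 f hf _ hSf
      rwa [one_mul] at h
    have hprodval : f * (fun x : Multiplicative (ZMod 3) => f x⁻¹)
        = (Pi.single (1:Multiplicative (ZMod 3)) (1:k) : Multiplicative (ZMod 3) → k) := by
      refine myExt3 ?_ ?_ ?_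
      · show f 1 * f (1:Multiplicative (ZMod 3))⁻¹ = _
        rw [inv_one, hf1, p00]; ring
      · show f (ofAdd 1) * f (ofAdd (1:ZMod 3))⁻¹ = _
        rw [hiv1, hf2, p01]; ring
      · show f (ofAdd 2) * f (ofAdd (2:ZMod 3))⁻¹ = _
        rw [hiv2, hf2, p02]; ring
    rw [hprodval] at hprod
    have hplusval : (Pi.single (ofAdd (1:ZMod 3)) (1:k) : Multiplicative (ZMod 3) → k)
        + (Pi.single (ofAdd (2:ZMod 3)) (1:k) : Multiplicative (ZMod 3) → k)
        = (1 : Multiplicative (ZMod 3) → k)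
          - (Pi.single (1:Multiplicative (ZMod 3)) (1:k) : Multiplicative (ZMod 3) → k) := by
      refine myExt3 ?_ ?_ ?_ <;>
        simp [Pi.add_apply, Pi.sub_apply, Pi.one_apply, p00, p01, p02, p10, p11, p12, p20, p21, p22]
    have hplusmem : (Pi.single (ofAdd (1:ZMod 3)) (1:k) : Multiplicative (ZMod 3) → k)
        + (Pi.single (ofAdd (2:ZMod 3)) (1:k) : Multiplicative (ZMod 3) → k) ∈ 𝒜 1 := by
      rw [hplusval]
      exact sub_mem hone hprod
    have hzero : (Pi.single (ofAdd (1:ZMod 3)) (1:k) : Multiplicative (ZMod 3) → k)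
        + (Pi.single (ofAdd (2:ZMod 3)) (1:k) : Multiplicative (ZMod 3) → k) = 0 :=
      hdisjSup 1 w (w*w) hw1 hww1 _ _ _ hplusmem he1 he2 rfl
    have h := congrFun hzero (ofAdd (1:ZMod 3))
    rw [Pi.add_apply, p11, p21, Pi.zero_apply] at h
    have h1 : (1:k) = 0 := by simpa using h
    exact one_ne_zero h1
  · push_neg at hex
    have hsupp : ∀ x : Γ, 𝒜 x ≠ ⊥ → x = 1 ∨ x = s := by
      intro x hx
      by_contra h
      push_neg at h
      exact hx (hex x h.1 h.2)
    obtain ⟨a, ha, ha0⟩ := (Submodule.ne_bot_iff _).mp hsBot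
    have ha1 : a 1 = 0 := hcounit s hs1 a ha
    have haa0 : a * a ≠ 0 := by
      intro h
      apply ha0
      apply hzero_of ha1
      · have h1 := congrFun h (ofAdd (1:ZMod 3))
        rw [Pi.mul_apply, Pi.zero_apply] at h1
        exact mul_self_eq_zero.mp h1
      · have h1 := congrFun h (ofAdd (2:ZMod 3))
        rw [Pi.mul_apply, Pi.zero_apply] at h1
        exact mul_self_eq_zero.mp h1
    have hss : s * s = 1 := by
      have hmem := hmul s s a ha a ha
      have hb : 𝒜 (s*s) ≠ ⊥ := by
        intro h
        rw [h, Submodule.mem_bot] at hmem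
        exact haa0 hmem
      rcases hsupp _ hb with h | h
      · exact h
      · exact absurd (mul_eq_right.mp h) hs1
    -- decompose the comultiplication of a
    have hmemspan : ∀ c ∈ 𝒜 s, ∃ μ : k, c = μ • a := hspan s hs1 a ha ha0
    have hbound : tensorComponent 𝒜 s ≤
        Submodule.map (mulLf k (Multiplicative (ZMod 3)) a) (𝒜 1) ⊔
        Submodule.map (mulRf k (Multiplicative (ZMod 3)) a) (𝒜 1) := by
      unfold tensorComponent
      refine iSup_le ?_
      intro x
      rw [Submodule.span_le]
      rintro f ⟨b, hb, c, hc, rfl⟩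
      by_cases hx1 : x = 1
      · subst hx1
        rw [inv_one, one_mul] at hc
        obtain ⟨μ, rfl⟩ := hmemspan c hc
        apply Submodule.mem_sup_left
        refine Submodule.mem_map.mpr ⟨μ • b, Submodule.smul_mem _ _ hb, ?_⟩
        funext p
        show (μ • b) p.1 * a p.2 = b p.1 * (μ • a) p.2
        simp only [Pi.smul_apply, smul_eq_mul]; ring
      · by_cases hxs : x = s
        · subst hxs
          rw [inv_mul_cancel] at hc
          obtain ⟨μ, rfl⟩ := hmemspan b hb
          apply Submodule.mem_sup_right
          refine Submodule.mem_map.mpr ⟨μ • c, Submodule.smul_mem _ _ hc, ?_⟩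
          funext p
          show a p.1 * (μ • c) p.2 = (μ • a) p.1 * c p.2
          simp only [Pi.smul_apply, smul_eq_mul]; ring
        · have hbot : 𝒜 x = ⊥ := hex x hx1 hxs
          rw [hbot, Submodule.mem_bot] at hb
          subst hb
          rw [show (fun p : Multiplicative (ZMod 3) × Multiplicative (ZMod 3) =>
            (0 : Multiplicative (ZMod 3) → k) p.1 * c p.2) = 0 from by funext p; simp]
          exact zero_mem _
    have hΔ := hbound (hcomul s a ha)
    rw [Submodule.mem_sup] at hΔ
    obtain ⟨y, hy, z, hz, hyz⟩ := hΔ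
    obtain ⟨b, hb, rfl⟩ := Submodule.mem_map.mp hy
    obtain ⟨c, hc, rfl⟩ := Submodule.mem_map.mp hz
    have key : ∀ x y : Multiplicative (ZMod 3), a (x*y) = b x * a y + a x * c y := by
      intro x y
      have h := congrFun hyz (x, y)
      simpa [mulLf, mulRf] using h.symm
    obtain ⟨y0, hy0⟩ := Function.ne_iff.mp ha0
    have hy0' : a y0 ≠ 0 := by simpa using hy0
    have hb1 : b 1 = 1 := by
      have h := key 1 y0
      rw [one_mul, ha1] at h
      have h2 : (b 1 - 1) * a y0 = 0 := by linear_combination -h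
      rcases mul_eq_zero.mp h2 with h3 | h3
      · exact sub_eq_zero.mp h3
      · exact absurd h3 hy0'
    have hc1 : c 1 = 1 := by
      have h := key y0 1
      rw [mul_one, ha1] at h
      have h2 : (c 1 - 1) * a y0 = 0 := by linear_combination -h
      rcases mul_eq_zero.mp h2 with h3 | h3
      · exact sub_eq_zero.mp h3
      · exact absurd h3 hy0'
    have hk1 : a (ofAdd 2) = a (ofAdd 1) * (b (ofAdd 1) + c (ofAdd 1)) := by
      have h := key (ofAdd 1) (ofAdd 1)
      rw [hm11] at h
      linear_combination h
    have hk2 : a (ofAdd 1) = a (ofAdd 2) * (b (ofAdd 2) + c (ofAdd 2)) := by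
      have h := key (ofAdd 2) (ofAdd 2)
      rw [hm22] at h
      linear_combination h
    have hA0 : a (ofAdd 1) ≠ 0 := by
      intro h
      apply ha0
      apply hzero_of ha1 h
      rw [hk1, h, zero_mul]
    have hB0 : a (ofAdd 2) ≠ 0 := by
      intro h
      apply ha0
      refine hzero_of ha1 ?_ h
      rw [hk2, h, zero_mul]
    have haa : a * a ∈ 𝒜 1 := hss ▸ hmul s s a ha a ha
    have hX : ((a (ofAdd 1) * a (ofAdd 2)) • (b + c)
        - (2*(a (ofAdd 1) * a (ofAdd 2))) • (1 : Multiplicative (ZMod 3) → k)) ∈ 𝒜 1 :=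
      sub_mem (Submodule.smul_mem _ _ (add_mem hb hc)) (Submodule.smul_mem _ _ hone)
    have hY : ((a (ofAdd 1) * a (ofAdd 1)) • ((a (ofAdd 1) * a (ofAdd 2)) • (b + c)
        - (2*(a (ofAdd 1) * a (ofAdd 2))) • (1 : Multiplicative (ZMod 3) → k))
        - (a (ofAdd 2) * a (ofAdd 2) - 2*(a (ofAdd 1) * a (ofAdd 2))) • (a*a)) ∈ 𝒜 1 :=
      sub_mem (Submodule.smul_mem _ _ hX) (Submodule.smul_mem _ _ haa)
    have hYval : ((a (ofAdd 1) * a (ofAdd 1)) • ((a (ofAdd 1) * a (ofAdd 2)) • (b + c)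
        - (2*(a (ofAdd 1) * a (ofAdd 2))) • (1 : Multiplicative (ZMod 3) → k))
        - (a (ofAdd 2) * a (ofAdd 2) - 2*(a (ofAdd 1) * a (ofAdd 2))) • (a*a))
        = ((a (ofAdd 1) - a (ofAdd 2))^3 * (a (ofAdd 1) + a (ofAdd 2))) •
          (Pi.single (ofAdd (2:ZMod 3)) (1:k) : Multiplicative (ZMod 3) → k) := by
      refine myExt3 ?_ ?_ ?_
      · simp only [Pi.sub_apply, Pi.smul_apply, Pi.add_apply, Pi.mul_apply, Pi.one_apply,
          smul_eq_mul, hb1, hc1, ha1, p20]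
        ring
      · simp only [Pi.sub_apply, Pi.smul_apply, Pi.add_apply, Pi.mul_apply, Pi.one_apply,
          smul_eq_mul, p21]
        linear_combination (-(a (ofAdd 1) * a (ofAdd 1) * a (ofAdd 2))) * hk1
      · simp only [Pi.sub_apply, Pi.smul_apply, Pi.add_apply, Pi.mul_apply, Pi.one_apply,
          smul_eq_mul, p22]
        linear_combination (-(a (ofAdd 1) * a (ofAdd 1) * a (ofAdd 1))) * hk2
    rw [hYval] at hY
    have hK : (a (ofAdd 1) - a (ofAdd 2))^3 * (a (ofAdd 1) + a (ofAdd 2)) = 0 := by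
      by_contra hK0
      have h2 : (Pi.single (ofAdd (2:ZMod 3)) (1:k) : Multiplicative (ZMod 3) → k) ∈ 𝒜 1 := by
        have h3 := Submodule.smul_mem (𝒜 1)
          ((a (ofAdd 1) - a (ofAdd 2))^3 * (a (ofAdd 1) + a (ofAdd 2)))⁻¹ hY
        rwa [smul_smul, inv_mul_cancel₀ hK0, one_smul] at h3
      have h3 : (Pi.single (ofAdd (2:ZMod 3)) (1:k) : Multiplicative (ZMod 3) → k) * a ∈ 𝒜 s := by
        have h4 := hmul 1 s _ h2 a ha
        rwa [one_mul] at h4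
      have h4 : (Pi.single (ofAdd (2:ZMod 3)) (1:k) : Multiplicative (ZMod 3) → k) * a
          = a (ofAdd 2) • (Pi.single (ofAdd (2:ZMod 3)) (1:k) : Multiplicative (ZMod 3) → k) := by
        refine myExt3 ?_ ?_ ?_ <;>
          simp [Pi.mul_apply, Pi.smul_apply, smul_eq_mul, p20, p21, p22, ha1]
      rw [h4] at h3
      have h5 : (Pi.single (ofAdd (2:ZMod 3)) (1:k) : Multiplicative (ZMod 3) → k) ∈ 𝒜 s := by
        have h6 := Submodule.smul_mem (𝒜 s) (a (ofAdd 2))⁻¹ h3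
        rwa [smul_smul, inv_mul_cancel₀ hB0, one_smul] at h6
      have h6 := hdisj (Ne.symm hs1) _ h2 h5
      have h7 := congrFun h6 (ofAdd (2:ZMod 3))
      rw [p22] at h7
      have h8 : (1:k) = 0 := by simpa using h7
      exact one_ne_zero h8
    have hαβne : a (ofAdd 1) ≠ a (ofAdd 2) := by
      intro hEq
      have h7 : a * a = a (ofAdd 2) • a := by
        refine myExt3 ?_ ?_ ?_
        · simp [Pi.mul_apply, ha1]
        · simp only [Pi.mul_apply, Pi.smul_apply, smul_eq_mul]
          linear_combination (a (ofAdd 1)) * hEq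
        · simp only [Pi.mul_apply, Pi.smul_apply, smul_eq_mul]
      have h8 : a * a ∈ 𝒜 s := h7 ▸ Submodule.smul_mem _ _ ha
      exact haa0 (hdisj (Ne.symm hs1) _ haa h8)
    have hBval : a (ofAdd 2) = - a (ofAdd 1) := by
      rcases mul_eq_zero.mp hK with h | h
      · exact absurd (sub_eq_zero.mp ((pow_eq_zero_iff (by norm_num)).mp h)) hαβne
      · linear_combination h
    have h2k : (2:k) ≠ 0 := by
      intro h2
      apply hαβne
      linear_combination -hBval + (a (ofAdd 1)) * h2
    have hminus : ((Pi.single (ofAdd (1:ZMod 3)) (1:k) : Multiplicative (ZMod 3) → k)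
        - (Pi.single (ofAdd (2:ZMod 3)) (1:k) : Multiplicative (ZMod 3) → k)) ∈ 𝒜 s := by
      have h : ((Pi.single (ofAdd (1:ZMod 3)) (1:k) : Multiplicative (ZMod 3) → k)
          - (Pi.single (ofAdd (2:ZMod 3)) (1:k) : Multiplicative (ZMod 3) → k))
          = (a (ofAdd 1))⁻¹ • a := by
        refine myExt3 ?_ ?_ ?_
        · simp [p10, p20, ha1]
        · simp only [Pi.sub_apply, Pi.smul_apply, smul_eq_mul, p11, p21]
          field_simp <;> norm_num
        · simp only [Pi.sub_apply, Pi.smul_apply, smul_eq_mul, p12, p22]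
          rw [hBval]; field_simp <;> norm_num
      rw [h]
      exact Submodule.smul_mem _ _ ha
    have hplus : ((Pi.single (ofAdd (1:ZMod 3)) (1:k) : Multiplicative (ZMod 3) → k)
        + (Pi.single (ofAdd (2:ZMod 3)) (1:k) : Multiplicative (ZMod 3) → k)) ∈ 𝒜 1 := by
      have h : ((Pi.single (ofAdd (1:ZMod 3)) (1:k) : Multiplicative (ZMod 3) → k)
          + (Pi.single (ofAdd (2:ZMod 3)) (1:k) : Multiplicative (ZMod 3) → k))
          = (a (ofAdd 1) * a (ofAdd 1))⁻¹ • (a * a) := by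
        refine myExt3 ?_ ?_ ?_
        · simp [p10, p20, ha1]
        · simp only [Pi.add_apply, Pi.smul_apply, Pi.mul_apply, smul_eq_mul, p11, p21]
          field_simp <;> norm_num
        · simp only [Pi.add_apply, Pi.smul_apply, Pi.mul_apply, smul_eq_mul, p12, p22]
          rw [hBval]; field_simp <;> norm_num
      rw [h]
      exact Submodule.smul_mem _ _ haa
    have hd0 : (Pi.single (1:Multiplicative (ZMod 3)) (1:k) : Multiplicative (ZMod 3) → k) ∈ 𝒜 1 := by
      have h : (Pi.single (1:Multiplicative (ZMod 3)) (1:k) : Multiplicative (ZMod 3) → k)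
          = (1 : Multiplicative (ZMod 3) → k)
            - ((Pi.single (ofAdd (1:ZMod 3)) (1:k) : Multiplicative (ZMod 3) → k)
              + (Pi.single (ofAdd (2:ZMod 3)) (1:k) : Multiplicative (ZMod 3) → k)) := by
        refine myExt3 ?_ ?_ ?_ <;>
          simp [Pi.sub_apply, Pi.add_apply, Pi.one_apply, p00, p01, p02, p10, p11, p12, p20, p21, p22]
      rw [h]
      exact sub_mem hone hplus
    refine ⟨h2k, s, hs1, hss, ?_, ?_, ?_⟩
    · -- Γ = {1, s}
      intro u
      let H : Subgroup Γ :=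
        { carrier := {1, s}
          one_mem' := Or.inl rfl
          mul_mem' := by
            rintro x y hx hy
            simp only [Set.mem_insert_iff, Set.mem_singleton_iff] at hx hy ⊢
            rcases hx with rfl | rfl <;> rcases hy with rfl | rfl
            · left; rw [one_mul]
            · right; rw [one_mul]
            · right; rw [mul_one]
            · left; exact hss
          inv_mem' := by
            rintro x hx
            simp only [Set.mem_insert_iff, Set.mem_singleton_iff] at hx ⊢
            rcases hx with rfl | rfl
            · left; exact inv_one
            · right; exact inv_eq_of_mul_eq_one_right hss }
      have hle : (⊤ : Subgroup Γ) ≤ H := by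
        rw [← hconn]
        refine (Subgroup.closure_le H).mpr ?_
        intro x hx
        have := hsupp x hx
        exact this
      have hu := hle (Subgroup.mem_top u)
      exact hu
    · -- the trivial component
      apply le_antisymm
      · intro x hx
        have hmem2 : x - ((x 1) • (Pi.single (1:Multiplicative (ZMod 3)) (1:k) : Multiplicative (ZMod 3) → k)
            + ((x (ofAdd 1) + x (ofAdd 2))/2) • ((Pi.single (ofAdd (1:ZMod 3)) (1:k) : Multiplicative (ZMod 3) → k)
              + (Pi.single (ofAdd (2:ZMod 3)) (1:k) : Multiplicative (ZMod 3) → k))) ∈ 𝒜 1 :=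
          sub_mem hx (add_mem (Submodule.smul_mem _ _ hd0) (Submodule.smul_mem _ _ hplus))
        have hval : x - ((x 1) • (Pi.single (1:Multiplicative (ZMod 3)) (1:k) : Multiplicative (ZMod 3) → k)
            + ((x (ofAdd 1) + x (ofAdd 2))/2) • ((Pi.single (ofAdd (1:ZMod 3)) (1:k) : Multiplicative (ZMod 3) → k)
              + (Pi.single (ofAdd (2:ZMod 3)) (1:k) : Multiplicative (ZMod 3) → k)))
            = ((x (ofAdd 1) - x (ofAdd 2))/2) • ((Pi.single (ofAdd (1:ZMod 3)) (1:k) : Multiplicative (ZMod 3) → k)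
              - (Pi.single (ofAdd (2:ZMod 3)) (1:k) : Multiplicative (ZMod 3) → k)) := by
          refine myExt3 ?_ ?_ ?_
          · simp only [Pi.sub_apply, Pi.add_apply, Pi.smul_apply, smul_eq_mul,
              p00, p01, p02, p10, p20]
            ring
          · simp only [Pi.sub_apply, Pi.add_apply, Pi.smul_apply, smul_eq_mul,
              p01, p11, p21]
            field_simp
            ring
          · simp only [Pi.sub_apply, Pi.add_apply, Pi.smul_apply, smul_eq_mul,
              p02, p12, p22]
            field_simp
            ring
        have hmem3 : ((x (ofAdd 1) - x (ofAdd 2))/2) • ((Pi.single (ofAdd (1:ZMod 3)) (1:k) : Multiplicative (ZMod 3) → k)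
            - (Pi.single (ofAdd (2:ZMod 3)) (1:k) : Multiplicative (ZMod 3) → k)) ∈ 𝒜 s :=
          Submodule.smul_mem _ _ hminus
        rw [hval] at hmem2
        have h0 := hdisj (Ne.symm hs1) _ hmem2 hmem3
        have hxe : x = (x 1) • (Pi.single (1:Multiplicative (ZMod 3)) (1:k) : Multiplicative (ZMod 3) → k)
            + ((x (ofAdd 1) + x (ofAdd 2))/2) • ((Pi.single (ofAdd (1:ZMod 3)) (1:k) : Multiplicative (ZMod 3) → k)
              + (Pi.single (ofAdd (2:ZMod 3)) (1:k) : Multiplicative (ZMod 3) → k)) := by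
          exact sub_eq_zero.mp (by rw [hval]; exact h0)
        rw [hxe]
        exact add_mem
          (Submodule.smul_mem _ _ (Submodule.subset_span (Set.mem_insert _ _)))
          (Submodule.smul_mem _ _ (Submodule.subset_span (Set.mem_insert_of_mem _ rfl)))
      · rw [Submodule.span_le]
        rintro f hf
        simp only [Set.mem_insert_iff, Set.mem_singleton_iff] at hf
        rcases hf with rfl | rfl
        · exact hd0
        · exact hplus
    · -- the nontrivial component
      apply le_antisymm
      · intro cc hcc
        obtain ⟨μ, rfl⟩ := hmemspan cc hcc
        refine Submodule.mem_span_singleton.mpr ⟨μ * a (ofAdd 1), ?_⟩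
        refine myExt3 ?_ ?_ ?_ <;>
          simp only [Pi.sub_apply, Pi.smul_apply, smul_eq_mul, p10, p11, p12, p20, p21, p22, ha1]
        · ring
        · ring
        · rw [hBval]; ring
      · rw [Submodule.span_le]
        rintro f hf
        rw [Set.mem_singleton_iff] at hf
        subst hf
        exact hminus
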